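/- Theorem 1, case B⁺₁,>,₌: Assume there exist a > 0, τ > 0 and continuously differentiable functions bᵤ, bₗ : [0,a] → ℝ with bᵤ(0) = bₗ(0) = 0, bᵤ'(x) ≥ τ for all x ∈ [0,a], bₗ'(0) = 0 and bₗ concave on [0,a], such that (x, bᵤ(x)) ∈ Ĝ and (x, bₗ(x)) ∈ Ĝ for every x ∈ (0,a], the boundary condition (5⁺ₗ) holds: f₀(x, bₗ(x)) ≥ bₗ'(x) for all x ∈ (0,a], and there exists c ∈ (0,a] such that every point (x,y) with 0 < x ≤ c and bₗ(x) < y < bᵤ(x) belongs to G. Then there exist h ∈ (0,c] and a function φ : [0,h] → ℝ with φ(0) = 0 which is a solution of y' = f₀(x,y) with graph in G̃ on [0,h]. -/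

import Mathlib

open Set

open Filter Topology

section MainProof


/-- One-sided comparison lemma via Gronwall-type argument. -/
lemma comp_aux {h L : ℝ} {u v u' v' : ℝ → ℝ}
    (hu : ∀ x ∈ Icc (0:ℝ) h, HasDerivWithinAt u (u' x) (Icc 0 h) x)
    (hv : ∀ x ∈ Icc (0:ℝ) h, HasDerivWithinAt v (v' x) (Icc 0 h) x)
    (h0 : u 0 ≤ v 0)
    (key : ∀ x ∈ Icc (0:ℝ) h, v x < u x → u' x - v' x ≤ L * (u x - v x)) :
    ∀ x ∈ Icc (0:ℝ) h, u x ≤ v x := by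
  intro x₀ hx₀
  by_contra hlt
  push_neg at hlt
  set w : ℝ → ℝ := fun x => (u x - v x) * Real.exp (-L * x) with hwdef
  have hwd : ∀ x ∈ Icc (0:ℝ) h, HasDerivWithinAt w
      ((u' x - v' x) * Real.exp (-L * x) + (u x - v x) * (Real.exp (-L * x) * (-L))) (Icc 0 h) x := by
    intro x hx
    have he : HasDerivAt (fun x : ℝ => Real.exp (-L * x)) (Real.exp (-L * x) * (-L)) x := by
      have : HasDerivAt (fun x : ℝ => -L * x) (-L) x := by
        simpa using (hasDerivAt_id x).const_mul (-L)
      simpa using this.exp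
    exact ((hu x hx).sub (hv x hx)).mul he.hasDerivWithinAt
  have hwc : ContinuousOn w (Icc 0 h) := fun x hx => ((hwd x hx).continuousWithinAt)
  have hw0 : w 0 ≤ 0 := by
    have := Real.exp_pos (-L * 0)
    simp only [hwdef]
    nlinarith
  have hwx₀ : 0 < w x₀ := by
    have := Real.exp_pos (-L * x₀)
    simp only [hwdef]
    nlinarith
  set A := Icc 0 x₀ ∩ w ⁻¹' Iic 0 with hA
  have hsub : Icc (0:ℝ) x₀ ⊆ Icc 0 h := Icc_subset_Icc le_rfl hx₀.2
  have hA0 : (0:ℝ) ∈ A := ⟨left_mem_Icc.2 hx₀.1, by simpa using hw0⟩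
  have hAbdd : BddAbove A := (bddAbove_Icc).mono inter_subset_left
  have hAclosed : IsClosed A :=
    (hwc.mono hsub).preimage_isClosed_of_isClosed isClosed_Icc isClosed_Iic
  set s := sSup A with hs
  have hsA : s ∈ A := hAclosed.csSup_mem ⟨0, hA0⟩ hAbdd
  have hws : w s ≤ 0 := hsA.2
  have hsx₀ : s < x₀ := by
    rcases lt_or_eq_of_le hsA.1.2 with H | H
    · exact H
    · exact absurd (H ▸ hws) (by linarith)
  have hpos : ∀ x ∈ Ioc s x₀, 0 < w x := by
    intro x hx
    by_contra hle
    push_neg at hle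
    have hxA : x ∈ A := ⟨⟨hsA.1.1.trans hx.1.le, hx.2⟩, hle⟩
    exact absurd (le_csSup hAbdd hxA) (not_le.2 hx.1)
  have hmono : MonotoneOn (fun x => -w x) (Icc s x₀) := by
    apply monotoneOn_of_hasDerivWithinAt_nonneg (convex_Icc s x₀)
      (f' := fun x => -((u' x - v' x) * Real.exp (-L * x) + (u x - v x) * (Real.exp (-L * x) * (-L))))
      (hwc.mono (Icc_subset_Icc hsA.1.1 hx₀.2)).neg
    · intro x hx
      rw [interior_Icc] at hx
      have hxh : x ∈ Icc (0:ℝ) h := ⟨hsA.1.1.trans hx.1.le, hx.2.le.trans hx₀.2⟩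
      refine ((hwd x hxh).neg).mono ?_
      rw [interior_Icc]
      exact fun y hy => ⟨hsA.1.1.trans hy.1.le, hy.2.le.trans hx₀.2⟩
    · intro x hx
      rw [interior_Icc] at hx
      have hxh : x ∈ Icc (0:ℝ) h := ⟨hsA.1.1.trans hx.1.le, hx.2.le.trans hx₀.2⟩
      have hwpos := hpos x ⟨hx.1, hx.2.le⟩
      have huv : v x < u x := by
        have := Real.exp_pos (-L * x)
        by_contra hc'
        push_neg at hc'
        simp only [hwdef] at hwpos
        nlinarith
      have hk := key x hxh huv
      have := Real.exp_pos (-L * x)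
      nlinarith
  have := hmono ⟨le_rfl, hsx₀.le⟩ ⟨hsx₀.le, le_rfl⟩ hsx₀.le
  simp only [neg_le_neg_iff] at this
  nlinarith

/-- FTC forward: integral of the derivative. -/
lemma ftc_fwd {h : ℝ} {ψ d : ℝ → ℝ}
    (hψ : ∀ x ∈ Icc (0:ℝ) h, HasDerivWithinAt ψ (d x) (Icc 0 h) x)
    (hd : ContinuousOn d (Icc 0 h)) {x : ℝ} (hx : x ∈ Icc (0:ℝ) h) :
    ∫ t in (0:ℝ)..x, d t = ψ x - ψ 0 := by
  have hsub : Icc (0:ℝ) x ⊆ Icc 0 h := Icc_subset_Icc le_rfl hx.2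
  apply intervalIntegral.integral_eq_sub_of_hasDeriv_right_of_le hx.1
  · exact fun t ht => ((hψ t (hsub ht)).continuousWithinAt).mono hsub
  · intro t ht
    have hth : t ∈ Icc (0:ℝ) h := ⟨ht.1.le, (ht.2.trans_le hx.2).le⟩
    have : HasDerivAt ψ (d t) t :=
      (hψ t hth).hasDerivAt (Icc_mem_nhds ht.1 (ht.2.trans_le hx.2))
    exact this.hasDerivWithinAt
  · exact (hd.mono hsub).intervalIntegrable_of_Icc hx.1

/-- FTC backward: derivative of the integral within `Icc 0 h`. -/
lemma ftc_bwd {h : ℝ} {w : ℝ → ℝ} (hw : Continuous w) {x : ℝ} (hx : x ∈ Icc (0:ℝ) h) :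
    HasDerivWithinAt (fun y => ∫ t in (0:ℝ)..y, w t) (w x) (Icc 0 h) x := by
  have hint : ∀ y : ℝ, IntervalIntegrable w MeasureTheory.volume 0 y :=
    fun y => hw.intervalIntegrable 0 y
  rcases eq_or_lt_of_le hx.1 with h0 | h0
  · subst h0
    have := intervalIntegral.integral_hasDerivWithinAt_right (hint 0)
      (t := Ioi (0:ℝ)) (s := Ici (0:ℝ))
      (hw.stronglyMeasurableAtFilter _ _) hw.continuousWithinAt
    exact this.mono Icc_subset_Ici_self
  rcases eq_or_lt_of_le hx.2 with h1 | h1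
  · subst h1
    have := intervalIntegral.integral_hasDerivWithinAt_right (hint x)
      (t := Iic x) (s := Iic x)
      (hw.stronglyMeasurableAtFilter _ _) hw.continuousWithinAt
    exact this.mono Icc_subset_Iic_self
  · have := intervalIntegral.integral_hasDerivAt_right (hint x)
      (hw.stronglyMeasurableAtFilter _ _) hw.continuousAt
    exact this.hasDerivWithinAt


set_option maxHeartbeats 2000000 in
/-- Theorem 1, case B⁺₁,>,₌. -/
theorem theorem1_case_B1_gt_eq
    (G Ghat : Set (ℝ × ℝ)) (hGopen : IsOpen G) (hGhat : Ghat ⊆ frontier G)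
    (f₀ : ℝ × ℝ → ℝ) (hf : ContinuousOn f₀ (G ∪ Ghat))
    (hO : ((0 : ℝ), (0 : ℝ)) ∈ Ghat) (hf0 : f₀ (0, 0) = 0)
    (a τ : ℝ) (ha : 0 < a) (hτ : 0 < τ)
    (bu bu' bl bl' : ℝ → ℝ)
    (hderivu : ∀ x ∈ Icc (0 : ℝ) a, HasDerivWithinAt bu (bu' x) (Icc (0 : ℝ) a) x)
    (hbu'cont : ContinuousOn bu' (Icc (0 : ℝ) a))
    (hderivl : ∀ x ∈ Icc (0 : ℝ) a, HasDerivWithinAt bl (bl' x) (Icc (0 : ℝ) a) x)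
    (hbl'cont : ContinuousOn bl' (Icc (0 : ℝ) a))
    (hbu0 : bu 0 = 0) (hbl0 : bl 0 = 0)
    (hbu'τ : ∀ x ∈ Icc (0 : ℝ) a, τ ≤ bu' x)
    (hbl'0 : bl' 0 = 0)
    (hconc : ConcaveOn ℝ (Icc (0 : ℝ) a) bl)
    (hcurveu : ∀ x ∈ Ioc (0 : ℝ) a, (x, bu x) ∈ Ghat)
    (hcurvel : ∀ x ∈ Ioc (0 : ℝ) a, (x, bl x) ∈ Ghat)
    (hbcl : ∀ x ∈ Ioc (0 : ℝ) a, bl' x ≤ f₀ (x, bl x))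
    (c : ℝ) (hc : c ∈ Ioc (0 : ℝ) a)
    (hin : ∀ x y : ℝ, 0 < x → x ≤ c → bl x < y → y < bu x → (x, y) ∈ G) :
    ∃ h ∈ Ioc (0 : ℝ) c, ∃ φ : ℝ → ℝ, φ 0 = 0 ∧
      ∀ x ∈ Icc (0 : ℝ) h, (x, φ x) ∈ G ∪ Ghat ∧
        HasDerivWithinAt φ (f₀ (x, φ x)) (Icc (0 : ℝ) h) x := by
  obtain ⟨hc0, hca⟩ := hc
  set S : Set (ℝ × ℝ) := G ∪ Ghat with hSdef
  set M : ℝ := τ / 2 with hMdef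
  have hM : 0 < M := by positivity
  -- continuity of bl, bu on Icc 0 a
  have hblc : ContinuousOn bl (Icc 0 a) := fun x hx => (hderivl x hx).continuousWithinAt
  have hbuc : ContinuousOn bu (Icc 0 a) := fun x hx => (hderivu x hx).continuousWithinAt
  -- Step 1 : bl ≤ 0 on Icc 0 a
  have hblle : ∀ x ∈ Icc (0:ℝ) a, bl x ≤ 0 := by
    intro x hx
    rcases eq_or_lt_of_le hx.1 with h0 | h0
    · rw [← h0, hbl0]
    -- slope argument
    have hslope : ∀ t ∈ Ioo (0:ℝ) x, bl x / x ≤ bl t / t := by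
      intro t ht
      have := hconc.slope_anti_adjacent (left_mem_Icc.2 ha.le) hx ht.1 ht.2
      rw [hbl0] at this
      have h1 : (bl x - bl t) / (x - t) ≤ bl t / t := by
        simpa using this
      rw [div_le_div_iff₀ h0 ht.1]
      rw [div_le_div_iff₀ (by linarith [ht.2] : (0:ℝ) < x - t) ht.1] at h1
      nlinarith
    have hset : Icc (0:ℝ) a \ {0} = Ioc 0 a := by
      ext t
      simp only [mem_diff, mem_Icc, mem_singleton_iff, mem_Ioc]
      constructor
      · rintro ⟨⟨h1, h2⟩, h3⟩; exact ⟨lt_of_le_of_ne h1 (Ne.symm h3), h2⟩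
      · rintro ⟨h1, h2⟩; exact ⟨⟨h1.le, h2⟩, h1.ne'⟩
    have htend : Tendsto (slope bl 0) (𝓝[Icc (0:ℝ) a \ {0}] 0) (𝓝 (bl' 0)) :=
      hasDerivWithinAt_iff_tendsto_slope.1 (hderivl 0 (left_mem_Icc.2 ha.le))
    rw [hset] at htend
    have hne : (𝓝[Ioc (0:ℝ) a] (0:ℝ)).NeBot := by
      rw [← mem_closure_iff_nhdsWithin_neBot, closure_Ioc ha.ne]
      exact left_mem_Icc.2 ha.le
    have hev : ∀ᶠ t in 𝓝[Ioc (0:ℝ) a] (0:ℝ), bl x / x ≤ slope bl 0 t := by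
      have hx' : ∀ᶠ t in 𝓝[Ioc (0:ℝ) a] (0:ℝ), t < x :=
        eventually_nhdsWithin_of_eventually_nhds (eventually_lt_nhds h0)
      filter_upwards [hx', self_mem_nhdsWithin] with t h1 h2
      have := hslope t ⟨h2.1, h1⟩
      rw [slope_def_field]
      rw [hbl0]
      simpa using this
    have hle : bl x / x ≤ bl' 0 := ge_of_tendsto htend hev
    rw [hbl'0] at hle
    have := div_nonpos_iff.1 hle
    rcases this with ⟨_, h2⟩ | ⟨h1, _⟩
    · linarith
    · exact h1
  -- Step 2 : τ * x ≤ bu x on Icc 0 a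
  have hbuge : ∀ x ∈ Icc (0:ℝ) a, τ * x ≤ bu x := by
    intro x hx
    have hψd : ∀ y ∈ Icc (0:ℝ) a, HasDerivWithinAt (fun z => bu z - τ * z) (bu' y - τ) (Icc 0 a) y := by
      intro y hy
      have : HasDerivAt (fun z : ℝ => τ * z) τ y := by simpa using (hasDerivAt_id y).const_mul τ
      exact (hderivu y hy).sub this.hasDerivWithinAt
    have hmono : MonotoneOn (fun z => bu z - τ * z) (Icc 0 a) := by
      apply monotoneOn_of_hasDerivWithinAt_nonneg (convex_Icc 0 a)
        (f' := fun y => bu' y - τ)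
        (fun y hy => (hψd y hy).continuousWithinAt)
      · intro y hy
        rw [interior_Icc] at hy
        exact (hψd y ⟨hy.1.le, hy.2.le⟩).mono (by rw [interior_Icc]; exact Ioo_subset_Icc_self)
      · intro y hy
        rw [interior_Icc] at hy
        have := hbu'τ y ⟨hy.1.le, hy.2.le⟩
        linarith
    have := hmono (left_mem_Icc.2 ha.le) hx hx.1
    simp only [hbu0] at this
    linarith
  have hblbu : ∀ x ∈ Icc (0:ℝ) a, bl x ≤ bu x := by
    intro x hx
    have h1 := hblle x hx
    have h2 := hbuge x hx
    nlinarith [hx.1]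
  -- Step 3 : δ from continuity of f₀ at the origin
  obtain ⟨δ, hδ0, hδ⟩ : ∃ δ > 0, ∀ p ∈ S, dist p ((0:ℝ),(0:ℝ)) < δ → |f₀ p| ≤ M := by
    have hcw : ContinuousWithinAt f₀ S ((0:ℝ),(0:ℝ)) := hf _ (Or.inr hO)
    rw [Metric.continuousWithinAt_iff] at hcw
    obtain ⟨δ, hδ0, hδ⟩ := hcw M hM
    refine ⟨δ, hδ0, fun p hp hdist => ?_⟩
    have := hδ hp hdist
    rw [hf0, Real.dist_eq, sub_zero] at this
    exact this.le
  -- Step 4 : choose h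
  obtain ⟨h, hh0, hhc, hhδ, hhbl, hhbu⟩ :
      ∃ h, 0 < h ∧ h ≤ c ∧ h < δ ∧ (∀ x ∈ Icc (0:ℝ) h, |bl x| < δ) ∧
        (∀ x ∈ Icc (0:ℝ) h, |bu x| < δ) := by
    have hblc0 : ContinuousWithinAt bl (Icc 0 a) 0 := hblc 0 (left_mem_Icc.2 ha.le)
    have hbuc0 : ContinuousWithinAt bu (Icc 0 a) 0 := hbuc 0 (left_mem_Icc.2 ha.le)
    rw [Metric.continuousWithinAt_iff] at hblc0 hbuc0
    obtain ⟨h₁, hh₁0, hh₁⟩ := hblc0 δ hδ0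
    obtain ⟨h₂, hh₂0, hh₂⟩ := hbuc0 δ hδ0
    refine ⟨min c (min (δ/2) (min (h₁/2) (h₂/2))), by positivity, min_le_left _ _, ?_, ?_, ?_⟩
    · calc min c (min (δ/2) (min (h₁/2) (h₂/2))) ≤ δ/2 := le_trans (min_le_right _ _) (min_le_left _ _)
        _ < δ := by linarith
    · intro x hx
      have hxa : x ∈ Icc (0:ℝ) a := ⟨hx.1, le_trans hx.2 (le_trans (min_le_left _ _) hca)⟩
      have hxd : dist x 0 < h₁ := by
        rw [Real.dist_eq, sub_zero, abs_of_nonneg hx.1]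
        calc x ≤ _ := hx.2
          _ ≤ h₁/2 := le_trans (min_le_right _ _) (le_trans (min_le_right _ _) (min_le_left _ _))
          _ < h₁ := by linarith
      have := hh₁ hxa hxd
      rwa [Real.dist_eq, hbl0, sub_zero] at this
    · intro x hx
      have hxa : x ∈ Icc (0:ℝ) a := ⟨hx.1, le_trans hx.2 (le_trans (min_le_left _ _) hca)⟩
      have hxd : dist x 0 < h₂ := by
        rw [Real.dist_eq, sub_zero, abs_of_nonneg hx.1]
        calc x ≤ _ := hx.2
          _ ≤ h₂/2 := le_trans (min_le_right _ _) (le_trans (min_le_right _ _) (min_le_right _ _))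
          _ < h₂ := by linarith
      have := hh₂ hxa hxd
      rwa [Real.dist_eq, hbu0, sub_zero] at this
  have hha : h ≤ a := hhc.trans hca
  have hsubI : Icc (0:ℝ) h ⊆ Icc 0 a := Icc_subset_Icc le_rfl hha
  -- clamping maps
  set q : ℝ → ℝ := fun x => max 0 (min x h) with hqdef
  have hqmem : ∀ x, q x ∈ Icc (0:ℝ) h := by
    intro x
    refine ⟨le_max_left _ _, max_le hh0.le (min_le_right _ _)⟩
  have hqid : ∀ x ∈ Icc (0:ℝ) h, q x = x := by
    intro x hx
    simp only [hqdef]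
    rw [min_eq_left hx.2, max_eq_right hx.1]
  have hqlip : ∀ x y, |q x - q y| ≤ |x - y| := by
    intro x y
    calc |q x - q y| ≤ max |0 - 0| |min x h - min y h| := abs_max_sub_max_le_max _ _ _ _
      _ ≤ |x - y| := by
          rw [sub_zero, abs_zero]
          refine max_le (abs_nonneg _) ?_
          calc |min x h - min y h| ≤ max |x - y| |h - h| := abs_min_sub_min_le_max _ _ _ _
            _ = |x - y| := by rw [sub_self, abs_zero]; exact max_eq_left (abs_nonneg _)
  -- the compact region K
  set K : Set (ℝ × ℝ) := {p | p.1 ∈ Icc (0:ℝ) h ∧ bl (q p.1) ≤ p.2 ∧ p.2 ≤ bu (q p.1)} with hKdef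
  have hKmem : ∀ x y : ℝ, (x, y) ∈ K → x ∈ Icc (0:ℝ) h ∧ bl x ≤ y ∧ y ≤ bu x := by
    intro x y hp
    simp only [hKdef, mem_setOf_eq] at hp
    obtain ⟨h1, h2, h3⟩ := hp
    rw [hqid _ h1] at h2 h3
    exact ⟨h1, h2, h3⟩
  have hKS : K ⊆ S := by
    rintro ⟨x, y⟩ hp
    obtain ⟨hx, h2, h3⟩ := hKmem x y hp
    rcases eq_or_lt_of_le hx.1 with h0 | h0
    · have hy : y = 0 := by
        rw [← h0] at h2 h3
        rw [hbl0] at h2; rw [hbu0] at h3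
        linarith
      rw [← h0, hy]
      exact Or.inr hO
    · rcases eq_or_lt_of_le h2 with hyl | hyl
      · exact Or.inr (hyl ▸ hcurvel x ⟨h0, hx.2.trans hha⟩)
      · rcases eq_or_lt_of_le h3 with hyu | hyu
        · exact Or.inr (hyu ▸ hcurveu x ⟨h0, hx.2.trans hha⟩)
        · exact Or.inl (hin x y h0 (hx.2.trans hhc) hyl hyu)
  have hfK : ∀ p ∈ K, |f₀ p| ≤ M := by
    rintro ⟨x, y⟩ hp
    obtain ⟨hx, h2, h3⟩ := hKmem x y hp
    apply hδ _ (hKS hp)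
    simp only [Prod.dist_eq, Real.dist_eq, sub_zero]
    apply max_lt
    · rw [abs_of_nonneg hx.1]; exact lt_of_le_of_lt hx.2 hhδ
    · have hbl' := hhbl x hx
      have hbu' := hhbu x hx
      rw [abs_lt] at hbl' hbu' ⊢
      constructor
      · linarith [hbl'.1]
      · linarith [hbu'.2]
  -- clamp and g
  set P : ℝ × ℝ → ℝ × ℝ := fun p => (q p.1, max (bl (q p.1)) (min p.2 (bu (q p.1)))) with hPdef
  have hPK : ∀ p, P p ∈ K := by
    intro p
    have h1 : q (q p.1) = q p.1 := hqid _ (hqmem p.1)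
    simp only [hKdef, hPdef, mem_setOf_eq, h1]
    exact ⟨hqmem p.1, le_max_left _ _,
      max_le (hblbu _ (hsubI (hqmem p.1))) (min_le_right _ _)⟩
  have hPid : ∀ x y : ℝ, (x, y) ∈ K → P (x, y) = (x, y) := by
    intro x y hp
    obtain ⟨hx, h2, h3⟩ := hKmem x y hp
    simp only [hPdef, Prod.mk.injEq]
    rw [hqid _ hx]
    exact ⟨rfl, by rw [min_eq_left h3, max_eq_right h2]⟩
  set g : ℝ × ℝ → ℝ := fun p => f₀ (P p) with hgdef
  have hgb : ∀ p, |g p| ≤ M := fun p => hfK _ (hPK p)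
  -- Lipschitz constants for bl and bu on Icc 0 h
  obtain ⟨Lb, hLb0, hLbl, hLbu⟩ :
      ∃ Lb ≥ 0, (∀ x ∈ Icc (0:ℝ) h, ∀ y ∈ Icc (0:ℝ) h, |bl x - bl y| ≤ Lb * |x - y|) ∧
        (∀ x ∈ Icc (0:ℝ) h, ∀ y ∈ Icc (0:ℝ) h, |bu x - bu y| ≤ Lb * |x - y|) := by
    obtain ⟨L1, hL1⟩ := (isCompact_Icc (a := (0:ℝ)) (b := a)).exists_bound_of_continuousOn hbl'cont
    obtain ⟨L2, hL2⟩ := (isCompact_Icc (a := (0:ℝ)) (b := a)).exists_bound_of_continuousOn hbu'cont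
    refine ⟨max 0 (max L1 L2), le_max_left _ _, ?_, ?_⟩
    · intro x hx y hy
      have := (convex_Icc (0:ℝ) h).norm_image_sub_le_of_norm_hasDerivWithin_le
        (f' := bl') (C := max 0 (max L1 L2)) (fun t ht => (hderivl t (hsubI ht)).mono hsubI)
        (fun t ht => le_trans (hL1 t (hsubI ht)) (le_trans (le_max_left _ _) (le_max_right _ _)))
        hy hx
      simpa [Real.norm_eq_abs] using this
    · intro x hx y hy
      have := (convex_Icc (0:ℝ) h).norm_image_sub_le_of_norm_hasDerivWithin_le
        (f' := bu') (C := max 0 (max L1 L2)) (fun t ht => (hderivu t (hsubI ht)).mono hsubI)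
        (fun t ht => le_trans (hL2 t (hsubI ht)) (le_trans (le_max_right _ _) (le_max_right _ _)))
        hy hx
      simpa [Real.norm_eq_abs] using this
  -- P is Lipschitz
  have hPlip : ∀ p p' : ℝ × ℝ, dist (P p) (P p') ≤ (1 + Lb) * dist p p' := by
    rintro ⟨x, y⟩ ⟨x', y'⟩
    have hD0 : (0:ℝ) ≤ dist (x, y) (x', y') := dist_nonneg
    have hx1 : dist x x' ≤ dist (x, y) (x', y') := by
      simp only [Prod.dist_eq]; exact le_max_left _ _
    have hy1 : dist y y' ≤ dist (x, y) (x', y') := by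
      simp only [Prod.dist_eq]; exact le_max_right _ _
    rw [Real.dist_eq] at hx1 hy1
    have hq1 : |q x - q x'| ≤ dist (x, y) (x', y') := le_trans (hqlip x x') hx1
    have hbl1 : |bl (q x) - bl (q x')| ≤ Lb * dist (x, y) (x', y') :=
      le_trans (hLbl _ (hqmem x) _ (hqmem x')) (by nlinarith)
    have hbu1 : |bu (q x) - bu (q x')| ≤ Lb * dist (x, y) (x', y') :=
      le_trans (hLbu _ (hqmem x) _ (hqmem x')) (by nlinarith)
    simp only [hPdef, Prod.dist_eq]
    apply max_le
    · rw [Real.dist_eq]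
      calc |q x - q x'| ≤ dist (x, y) (x', y') := hq1
        _ ≤ (1 + Lb) * dist (x, y) (x', y') := by nlinarith
    · rw [Real.dist_eq]
      calc |max (bl (q x)) (min y (bu (q x))) - max (bl (q x')) (min y' (bu (q x')))|
          ≤ max |bl (q x) - bl (q x')| |min y (bu (q x)) - min y' (bu (q x'))| :=
            abs_max_sub_max_le_max _ _ _ _
        _ ≤ (1 + Lb) * dist (x, y) (x', y') := by
            apply max_le
            · nlinarith
            · calc |min y (bu (q x)) - min y' (bu (q x'))|
                  ≤ max |y - y'| |bu (q x) - bu (q x')| := abs_min_sub_min_le_max _ _ _ _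
                _ ≤ (1 + Lb) * dist (x, y) (x', y') := by
                    apply max_le <;> nlinarith
  -- uniform continuity of g
  have hKcomp : IsCompact K := by
    obtain ⟨r, hr⟩ := (isCompact_Icc (a := (0:ℝ)) (b := a)).exists_bound_of_continuousOn
      (hblc.add hbuc.neg)
    obtain ⟨r1, hr1⟩ := (isCompact_Icc (a := (0:ℝ)) (b := a)).exists_bound_of_continuousOn hblc
    obtain ⟨r2, hr2⟩ := (isCompact_Icc (a := (0:ℝ)) (b := a)).exists_bound_of_continuousOn hbuc
    have hclosed : IsClosed K := by
      have hqc : Continuous q := continuous_const.max (continuous_id.min continuous_const)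
      have hblq : Continuous fun x => bl (q x) :=
        (hblc.mono hsubI).comp_continuous hqc hqmem
      have hbuq : Continuous fun x => bu (q x) :=
        (hbuc.mono hsubI).comp_continuous hqc hqmem
      have : K = (fun p : ℝ × ℝ => p.1) ⁻¹' Icc 0 h ∩
          ({p : ℝ × ℝ | bl (q p.1) ≤ p.2} ∩ {p : ℝ × ℝ | p.2 ≤ bu (q p.1)}) := by
        ext p; simp only [hKdef, mem_setOf_eq, mem_inter_iff, mem_preimage]
      rw [this]
      exact (isClosed_Icc.preimage continuous_fst).inter
        ((isClosed_le (hblq.comp continuous_fst) continuous_snd).inter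
          (isClosed_le continuous_snd (hbuq.comp continuous_fst)))
    apply IsCompact.of_isClosed_subset ((isCompact_Icc (a := (0:ℝ)) (b := h)).prod
      (isCompact_Icc (a := -(max |r1| |r2|)) (b := max |r1| |r2|))) hclosed
    rintro ⟨x, y⟩ hp
    obtain ⟨hx, h2, h3⟩ := hKmem x y hp
    refine mem_prod.2 ⟨hx, mem_Icc.2 ⟨?_, ?_⟩⟩
    · show -(max |r1| |r2|) ≤ y
      have hb := hr1 x (hsubI hx)
      rw [Real.norm_eq_abs, abs_le] at hb
      have h5 : r1 ≤ |r1| := le_abs_self r1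
      have h6 : |r1| ≤ max |r1| |r2| := le_max_left _ _
      linarith [hb.1]
    · show y ≤ max |r1| |r2|
      have hb := hr2 x (hsubI hx)
      rw [Real.norm_eq_abs, abs_le] at hb
      have h5 : r2 ≤ |r2| := le_abs_self r2
      have h6 : |r2| ≤ max |r1| |r2| := le_max_right _ _
      linarith [hb.2]
  have hgUC : ∀ ε > 0, ∃ ρ > 0, ∀ p p' : ℝ × ℝ, dist p p' < ρ → |g p - g p'| < ε := by
    intro ε hε
    have hUC := hKcomp.uniformContinuousOn_of_continuous (hf.mono hKS)
    rw [Metric.uniformContinuousOn_iff] at hUC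
    obtain ⟨δ₁, hδ₁0, hδ₁⟩ := hUC ε hε
    have h1Lb : (0:ℝ) < 1 + Lb := by linarith
    refine ⟨δ₁ / (1 + Lb), by positivity, fun p p' hpp => ?_⟩
    have h2 := hPlip p p'
    have h3 : dist (P p) (P p') < δ₁ := by
      calc dist (P p) (P p') ≤ (1 + Lb) * dist p p' := h2
        _ < (1 + Lb) * (δ₁ / (1 + Lb)) := by
            apply mul_lt_mul_of_pos_left hpp h1Lb
        _ = δ₁ := by field_simp
    have := hδ₁ _ (hPK p) _ (hPK p') h3
    rwa [Real.dist_eq] at this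
  have hgcont : Continuous g := by
    rw [Metric.continuous_iff]
    intro p ε hε
    obtain ⟨ρ, hρ0, hρ⟩ := hgUC ε hε
    exact ⟨ρ, hρ0, fun p' hp' => by rw [Real.dist_eq]; exact hρ p' p hp'⟩
  -- inf-convolutions
  set gc : ℕ → ℝ × ℝ → ℝ := fun n p => ⨅ z : ℝ, (g (p.1, z) + ((n:ℝ) + 1) * |p.2 - z|) with hgcdef
  have hn1 : ∀ n : ℕ, (0:ℝ) < (n:ℝ) + 1 := fun n => by positivity
  have hbddb : ∀ (n : ℕ) (p : ℝ × ℝ),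
      BddBelow (range fun z => g (p.1, z) + ((n:ℝ) + 1) * |p.2 - z|) := by
    intro n p
    refine ⟨-M, ?_⟩
    rintro _ ⟨z, rfl⟩
    show -M ≤ g (p.1, z) + ((n:ℝ) + 1) * |p.2 - z|
    have h1 := hgb (p.1, z)
    have h2 : (0:ℝ) ≤ ((n:ℝ) + 1) * |p.2 - z| := by positivity
    rw [abs_le] at h1
    linarith [h1.1]
  have hgc_le : ∀ n p, gc n p ≤ g p := by
    intro n p
    have := ciInf_le (hbddb n p) p.2
    simpa using this
  have hgc_ge : ∀ n p, -M ≤ gc n p := by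
    intro n p
    apply le_ciInf
    intro z
    show -M ≤ g (p.1, z) + ((n:ℝ) + 1) * |p.2 - z|
    have h1 := hgb (p.1, z)
    have h2 : (0:ℝ) ≤ ((n:ℝ) + 1) * |p.2 - z| := by positivity
    rw [abs_le] at h1
    linarith [h1.1]
  have hgc_lip : ∀ (n : ℕ) (x y y' : ℝ), gc n (x, y) ≤ gc n (x, y') + ((n:ℝ) + 1) * |y - y'| := by
    intro n x y y'
    have key : ∀ z : ℝ, gc n (x, y) - ((n:ℝ) + 1) * |y - y'| ≤ g (x, z) + ((n:ℝ) + 1) * |y' - z| := by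
      intro z
      have h1 : gc n (x, y) ≤ g (x, z) + ((n:ℝ) + 1) * |y - z| := ciInf_le (hbddb n (x, y)) z
      have h2 : |y - z| ≤ |y - y'| + |y' - z| := abs_sub_le y y' z
      nlinarith [hn1 n]
    have := le_ciInf key
    simp only [hgcdef] at this ⊢
    linarith
  have hgc_mono : ∀ (n : ℕ) (p : ℝ × ℝ), gc n p ≤ gc (n + 1) p := by
    intro n p
    apply le_ciInf
    intro z
    have h0 : gc n p ≤ g (p.1, z) + ((n:ℝ) + 1) * |p.2 - z| := ciInf_le (hbddb n p) z
    refine le_trans h0 ?_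
    show g (p.1, z) + ((n:ℝ) + 1) * |p.2 - z| ≤ g (p.1, z) + (((n+1:ℕ):ℝ) + 1) * |p.2 - z|
    have h2 : (0:ℝ) ≤ |p.2 - z| := abs_nonneg _
    have h3 : ((n:ℝ)) + 1 ≤ ((n+1:ℕ):ℝ) + 1 := by push_cast; linarith
    have h4 := mul_le_mul_of_nonneg_right h3 h2
    linarith
  have hgc_shift : ∀ (n : ℕ) (x x' y : ℝ) (e : ℝ), (∀ z, |g (x, z) - g (x', z)| ≤ e) →
      gc n (x, y) ≤ gc n (x', y) + e := by
    intro n x x' y e he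
    have key : ∀ z : ℝ, gc n (x, y) - e ≤ g (x', z) + ((n:ℝ) + 1) * |y - z| := by
      intro z
      have h1 : gc n (x, y) ≤ g (x, z) + ((n:ℝ) + 1) * |y - z| := ciInf_le (hbddb n (x, y)) z
      have h2 := he z
      rw [abs_le] at h2
      linarith [h2.1]
    have := le_ciInf key
    linarith
  have hgc_cont : ∀ n, Continuous (gc n) := by
    intro n
    rw [Metric.continuous_iff]
    rintro ⟨x₀, y₀⟩ ε hε
    obtain ⟨ρ₁, hρ₁0, hρ₁⟩ := hgUC (ε/4) (by positivity)
    refine ⟨min ρ₁ (ε / (4 * ((n:ℝ) + 1))), by positivity, ?_⟩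
    rintro ⟨x, y⟩ hd
    have hdx : |x - x₀| < ρ₁ := by
      have hle : dist x x₀ ≤ dist ((x:ℝ), y) (x₀, y₀) := by
        simp only [Prod.dist_eq]; exact le_max_left _ _
      rw [Real.dist_eq] at hle
      exact lt_of_le_of_lt hle (lt_of_lt_of_le hd (min_le_left _ _))
    have hdy : |y - y₀| < ε / (4 * ((n:ℝ) + 1)) := by
      have hle : dist y y₀ ≤ dist ((x:ℝ), y) (x₀, y₀) := by
        simp only [Prod.dist_eq]; exact le_max_right _ _
      rw [Real.dist_eq] at hle
      exact lt_of_le_of_lt hle (lt_of_lt_of_le hd (min_le_right _ _))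
    have he : ∀ z, |g (x, z) - g (x₀, z)| ≤ ε/4 := by
      intro z
      apply le_of_lt
      apply hρ₁
      simp only [Prod.dist_eq, Real.dist_eq, sub_self, abs_zero]
      rw [max_eq_left (abs_nonneg _)]
      exact hdx
    have he' : ∀ z, |g (x₀, z) - g (x, z)| ≤ ε/4 := by
      intro z
      rw [abs_sub_comm]
      exact he z
    have h1 : gc n (x, y) ≤ gc n (x₀, y₀) + ε/4 + ((n:ℝ) + 1) * |y - y₀| := by
      calc gc n (x, y) ≤ gc n (x₀, y) + ε/4 := hgc_shift n x x₀ y (ε/4) he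
        _ ≤ gc n (x₀, y₀) + ((n:ℝ) + 1) * |y - y₀| + ε/4 := by linarith [hgc_lip n x₀ y y₀]
        _ = gc n (x₀, y₀) + ε/4 + ((n:ℝ) + 1) * |y - y₀| := by ring
    have h2 : gc n (x₀, y₀) ≤ gc n (x, y) + ε/4 + ((n:ℝ) + 1) * |y₀ - y| := by
      calc gc n (x₀, y₀) ≤ gc n (x, y₀) + ε/4 := hgc_shift n x₀ x y₀ (ε/4) he'
        _ ≤ gc n (x, y) + ((n:ℝ) + 1) * |y₀ - y| + ε/4 := by linarith [hgc_lip n x y₀ y]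
        _ = gc n (x, y) + ε/4 + ((n:ℝ) + 1) * |y₀ - y| := by ring
    rw [Real.dist_eq, abs_lt]
    have h3 : ((n:ℝ) + 1) * |y - y₀| < ε/4 := by
      have := hn1 n
      calc ((n:ℝ) + 1) * |y - y₀| < ((n:ℝ) + 1) * (ε / (4 * ((n:ℝ) + 1))) :=
          mul_lt_mul_of_pos_left hdy this
        _ = ε/4 := by field_simp
    have h4 : ((n:ℝ) + 1) * |y₀ - y| < ε/4 := by rw [abs_sub_comm]; exact h3
    constructor
    · linarith
    · linarith
  have hgc_approx : ∀ ε > 0, ∃ N : ℕ, ∀ n ≥ N, ∀ p : ℝ × ℝ, g p - ε ≤ gc n p := by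
    intro ε hε
    obtain ⟨ρ, hρ0, hρ⟩ := hgUC ε hε
    obtain ⟨N, hN⟩ := exists_nat_ge (4 * M / ρ)
    refine ⟨N, fun n hn p => ?_⟩
    apply le_ciInf
    intro z
    show g p - ε ≤ g (p.1, z) + ((n:ℝ) + 1) * |p.2 - z|
    rcases lt_or_ge |p.2 - z| ρ with hz | hz
    · have : |g (p.1, z) - g (p.1, p.2)| < ε := by
        apply hρ
        simp only [Prod.dist_eq, Real.dist_eq, sub_self, abs_zero]
        rw [max_comm, max_eq_left (abs_nonneg _)]
        rwa [abs_sub_comm]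
      rw [abs_lt] at this
      have h2 : (0:ℝ) ≤ ((n:ℝ) + 1) * |p.2 - z| := by positivity
      have hpp : g p = g (p.1, p.2) := by rfl
      rw [hpp]
      linarith [this.1]
    · have h1 : ((n:ℝ) + 1) * |p.2 - z| ≥ ((N:ℝ) + 1) * ρ := by
        have hnn : ((N:ℝ) + 1) ≤ ((n:ℝ) + 1) := by
          have : (N:ℝ) ≤ (n:ℝ) := Nat.cast_le.2 hn
          linarith
        calc ((N:ℝ) + 1) * ρ ≤ ((n:ℝ) + 1) * ρ := by nlinarith [hρ0]
          _ ≤ ((n:ℝ) + 1) * |p.2 - z| := by nlinarith [hn1 n]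
      have h2 : 4 * M ≤ ((N:ℝ) + 1) * ρ := by
        have h5 : 4 * M / ρ * ρ ≤ (N:ℝ) * ρ := by nlinarith
        rw [div_mul_cancel₀ _ hρ0.ne'] at h5
        nlinarith
      have h3 := hgb (p.1, z)
      have h4 := hgb p
      rw [abs_le] at h3 h4
      linarith [h3.1, h4.2]
  -- Picard–Lindelöf solutions
  have hPLex : ∀ n : ℕ, ∃ α : ℝ → ℝ, α 0 = 0 ∧
      ∀ t ∈ Icc (0:ℝ) h, HasDerivWithinAt α (gc n (t, α t)) (Icc 0 h) t := by
    intro n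
    have hlip : ∀ t ∈ Icc (0:ℝ) h, LipschitzOnWith ⟨(n:ℝ) + 1, by positivity⟩
        (fun y => gc n (t, y)) (Metric.closedBall 0 (M * h + 1)) := by
      intro t _
      apply LipschitzWith.lipschitzOnWith
      apply LipschitzWith.of_dist_le_mul
      intro y y'
      rw [Real.dist_eq, Real.dist_eq]
      have h1 := hgc_lip n t y y'
      have h2 := hgc_lip n t y' y
      rw [abs_sub_comm y' y] at h2
      rw [abs_le]
      show -(((n:ℝ) + 1) * |y - y'|) ≤ _ ∧ _ ≤ ((n:ℝ) + 1) * |y - y'|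
      constructor <;> linarith
    have hpl : IsPicardLindelof (fun t y => gc n (t, y)) (tmin := 0) (tmax := h)
        ⟨0, left_mem_Icc.2 hh0.le⟩ (0:ℝ) ⟨M * h + 1, by positivity⟩ 0 ⟨M, hM.le⟩
        ⟨(n:ℝ) + 1, by positivity⟩ := by
      refine ⟨hlip, ?_, ?_, ?_⟩
      · intro y _
        exact ((hgc_cont n).comp (continuous_id.prodMk continuous_const)).continuousOn
      · intro t _ y _
        show |gc n (t, y)| ≤ M
        rw [abs_le]
        refine ⟨hgc_ge n (t, y), le_trans (hgc_le n (t, y)) ?_⟩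
        have := hgb (t, y)
        rw [abs_le] at this
        exact this.2
      · show M * max (h - 0) (0 - 0) ≤ (M * h + 1) - 0
        have : max (h - 0) (0 - 0) = h := by
          rw [sub_zero, sub_zero]
          exact max_eq_left hh0.le
        rw [this]
        nlinarith
    exact hpl.exists_eq_forall_mem_Icc_hasDerivWithinAt₀
  choose α hα0 hαd using hPLex
  have hαcont : ∀ n, ContinuousOn (α n) (Icc 0 h) :=
    fun n t ht => (hαd n t ht).continuousWithinAt
  have hαlip : ∀ n, ∀ x ∈ Icc (0:ℝ) h, ∀ y ∈ Icc (0:ℝ) h, |α n y - α n x| ≤ M * |y - x| := by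
    intro n x hx y hy
    have := (convex_Icc (0:ℝ) h).norm_image_sub_le_of_norm_hasDerivWithin_le
      (f' := fun t => gc n (t, α n t)) (fun t ht => hαd n t ht)
      (fun t _ => by
        rw [Real.norm_eq_abs, abs_le]
        refine ⟨hgc_ge n _, le_trans (hgc_le n _) ?_⟩
        have := hgb (t, α n t)
        rw [abs_le] at this
        exact this.2) hx hy
    simpa [Real.norm_eq_abs] using this
  have hαbd : ∀ n, ∀ t ∈ Icc (0:ℝ) h, |α n t| ≤ M * h := by
    intro n t ht
    have := hαlip n 0 (left_mem_Icc.2 hh0.le) t ht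
    rw [hα0 n, sub_zero, sub_zero] at this
    calc |α n t| ≤ M * |t| := this
      _ ≤ M * h := by
          rw [abs_of_nonneg ht.1]
          nlinarith [ht.2]
  -- monotonicity in n
  have hαmono : ∀ n, ∀ t ∈ Icc (0:ℝ) h, α n t ≤ α (n + 1) t := by
    intro n
    apply comp_aux (L := (n:ℝ) + 2) (hαd n) (hαd (n + 1))
    · rw [hα0 n, hα0 (n+1)]
    · intro x hx hvu
      have h1 : gc n (x, α n x) ≤ gc (n+1) (x, α n x) := hgc_mono n _
      have h2 : gc (n+1) (x, α n x) ≤ gc (n+1) (x, α (n+1) x) + (((n:ℝ)+1) + 1) * |α n x - α (n+1) x| := by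
        have := hgc_lip (n+1) x (α n x) (α (n+1) x)
        push_cast at this ⊢
        linarith
      rw [abs_of_pos (by linarith : (0:ℝ) < α n x - α (n+1) x)] at h2
      push_cast
      linarith
  have hαmono' : ∀ t ∈ Icc (0:ℝ) h, Monotone (fun n => α n t) := by
    intro t ht
    exact monotone_nat_of_le_succ (fun n => hαmono n t ht)
  have hαbdd : ∀ t ∈ Icc (0:ℝ) h, BddAbove (range fun n => α n t) := by
    intro t ht
    refine ⟨M * h, ?_⟩
    rintro _ ⟨n, rfl⟩
    have := hαbd n t ht
    rw [abs_le] at this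
    exact this.2
  -- the limit function
  set φl : ℝ → ℝ := fun x => ⨆ n, α n (q x) with hφldef
  have hφtend : ∀ t ∈ Icc (0:ℝ) h, Tendsto (fun n => α n t) atTop (𝓝 (φl t)) := by
    intro t ht
    have : φl t = ⨆ n, α n t := by rw [hφldef]; simp only [hqid t ht]
    rw [this]
    exact tendsto_atTop_ciSup (hαmono' t ht) (hαbdd t ht)
  have hφlip : ∀ x y, |φl x - φl y| ≤ M * |x - y| := by
    intro x y
    have h1 : Tendsto (fun n => α n (q x) - α n (q y)) atTop (𝓝 (φl (q x) - φl (q y))) :=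
      ((hφtend (q x) (hqmem x)).sub (hφtend (q y) (hqmem y)))
    have hqq : ∀ z, φl (q z) = φl z := by
      intro z
      rw [hφldef]
      simp only [hqid (q z) (hqmem z)]
    rw [hqq x, hqq y] at h1
    have h2 : ∀ n, |α n (q x) - α n (q y)| ≤ M * |x - y| := by
      intro n
      calc |α n (q x) - α n (q y)| ≤ M * |q x - q y| := hαlip n (q y) (hqmem y) (q x) (hqmem x)
        _ ≤ M * |x - y| := by nlinarith [hqlip x y, abs_nonneg (q x - q y)]
    exact le_of_tendsto' h1.abs h2
  have hφcont : Continuous φl := by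
    rw [Metric.continuous_iff]
    intro x ε hε
    refine ⟨ε / (M + 1), by positivity, fun y hy => ?_⟩
    rw [Real.dist_eq] at hy ⊢
    have hkey : |y - x| * (M + 1) < ε := (lt_div_iff₀ (by linarith)).1 hy
    calc |φl y - φl x| ≤ M * |y - x| := hφlip y x
      _ < ε := by nlinarith [abs_nonneg (y - x)]
  have hφ0 : φl 0 = 0 := by
    rw [hφldef]
    have : q 0 = 0 := hqid 0 (left_mem_Icc.2 hh0.le)
    simp only [this, hα0, ciSup_const]
  -- integral equations
  have hαint : ∀ n, ∀ x ∈ Icc (0:ℝ) h, α n x = ∫ t in (0:ℝ)..x, gc n (t, α n t) := by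
    intro n x hx
    have hd : ContinuousOn (fun t => gc n (t, α n t)) (Icc 0 h) :=
      (hgc_cont n).comp_continuousOn (continuousOn_id.prodMk (hαcont n))
    have := ftc_fwd (hαd n) hd hx
    rw [hα0 n, sub_zero] at this
    exact this.symm
  have hgc_tend : ∀ t ∈ Icc (0:ℝ) h, Tendsto (fun n => gc n (t, α n t)) atTop (𝓝 (g (t, φl t))) := by
    intro t ht
    rw [Metric.tendsto_atTop]
    intro ε hε
    obtain ⟨N₁, hN₁⟩ := hgc_approx (ε/2) (by positivity)
    obtain ⟨ρ, hρ0, hρ⟩ := hgUC (ε/2) (by positivity)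
    have htt := hφtend t ht
    rw [Metric.tendsto_atTop] at htt
    obtain ⟨N₂, hN₂⟩ := htt ρ hρ0
    refine ⟨max N₁ N₂, fun n hn => ?_⟩
    have hn₁ : n ≥ N₁ := le_trans (le_max_left _ _) hn
    have hn₂ : n ≥ N₂ := le_trans (le_max_right _ _) hn
    have h1 : |gc n (t, α n t) - g (t, α n t)| ≤ ε/2 := by
      have hA := hgc_le n (t, α n t)
      have hB := hN₁ n hn₁ (t, α n t)
      rw [abs_le]
      constructor <;> linarith
    have h2 : |g (t, α n t) - g (t, φl t)| < ε/2 := by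
      apply hρ
      simp only [Prod.dist_eq, Real.dist_eq, sub_self, abs_zero]
      rw [max_comm, max_eq_left (abs_nonneg _)]
      have := hN₂ n hn₂
      rwa [Real.dist_eq] at this
    rw [Real.dist_eq]
    calc |gc n (t, α n t) - g (t, φl t)|
        ≤ |gc n (t, α n t) - g (t, α n t)| + |g (t, α n t) - g (t, φl t)| := abs_sub_le _ _ _
      _ < ε := by linarith
  have hφeq : ∀ x ∈ Icc (0:ℝ) h, φl x = ∫ t in (0:ℝ)..x, g (t, φl t) := by
    intro x hx
    have hIsub : Set.uIoc (0:ℝ) x ⊆ Icc 0 h := by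
      rw [uIoc_of_le hx.1]
      exact (Ioc_subset_Icc_self).trans (Icc_subset_Icc le_rfl hx.2)
    have h2 : Tendsto (fun n => ∫ t in (0:ℝ)..x, gc n (t, α n t)) atTop
        (𝓝 (∫ t in (0:ℝ)..x, g (t, φl t))) := by
      apply intervalIntegral.tendsto_integral_filter_of_dominated_convergence
        (bound := fun _ => M)
      · apply Filter.Eventually.of_forall
        intro n
        apply ContinuousOn.aestronglyMeasurable _ measurableSet_uIoc
        exact ((hgc_cont n).comp_continuousOn (continuousOn_id.prodMk (hαcont n))).mono hIsub
      · apply Filter.Eventually.of_forall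
        intro n
        apply MeasureTheory.ae_of_all
        intro t _
        rw [Real.norm_eq_abs, abs_le]
        refine ⟨hgc_ge n _, le_trans (hgc_le n _) ?_⟩
        have := hgb (t, α n t)
        rw [abs_le] at this
        exact this.2
      · exact intervalIntegrable_const
      · apply MeasureTheory.ae_of_all
        intro t htI
        exact hgc_tend t (hIsub htI)
    have h1 : Tendsto (fun n => α n x) atTop (𝓝 (φl x)) := hφtend x hx
    have h3 : (fun n => α n x) = fun n => ∫ t in (0:ℝ)..x, gc n (t, α n t) := by
      funext n
      exact hαint n x hx
    rw [h3] at h1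
    exact tendsto_nhds_unique h1 h2
  have hwcont : Continuous (fun t => g (t, φl t)) :=
    hgcont.comp (continuous_id.prodMk hφcont)
  have hφd : ∀ x ∈ Icc (0:ℝ) h, HasDerivWithinAt φl (g (x, φl x)) (Icc 0 h) x := by
    intro x hx
    have hB := ftc_bwd (h := h) hwcont hx
    exact hB.congr (fun y hy => hφeq y hy) (hφeq x hx)
  -- barriers
  have hupper : ∀ x ∈ Icc (0:ℝ) h, φl x ≤ bu x := by
    apply comp_aux (L := 0) (u' := fun x => g (x, φl x)) (v' := bu') hφd
      (fun x hx => (hderivu x (hsubI hx)).mono hsubI)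
    · rw [hφ0, hbu0]
    · intro x hx hvu
      have h1 := hgb (x, φl x)
      have h2 := hbu'τ x (hsubI hx)
      rw [abs_le] at h1
      rw [zero_mul]
      simp only [hMdef] at h1
      linarith [h1.2]
  have hlower : ∀ x ∈ Icc (0:ℝ) h, bl x ≤ φl x := by
    apply comp_aux (L := 0) (u' := bl') (v' := fun x => g (x, φl x))
      (fun x hx => (hderivl x (hsubI hx)).mono hsubI) hφd
    · rw [hφ0, hbl0]
    · intro x hx hvu
      have hx0 : 0 < x := by
        rcases eq_or_lt_of_le hx.1 with h0 | h0
        · exfalso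
          rw [← h0] at hvu
          rw [hφ0, hbl0] at hvu
          exact lt_irrefl 0 hvu
        · exact h0
      have hgeq : g (x, φl x) = f₀ (x, bl x) := by
        simp only [hgdef, hPdef]
        rw [hqid x hx]
        have h1 : min (φl x) (bu x) = φl x :=
          min_eq_left (le_trans hvu.le (hblbu x (hsubI hx)))
        rw [h1, max_eq_left hvu.le]
      rw [hgeq, zero_mul]
      have := hbcl x ⟨hx0, hx.2.trans hha⟩
      linarith
  -- conclusion
  refine ⟨h, ⟨hh0, hhc⟩, φl, hφ0, fun x hx => ?_⟩
  have hmem : (x, φl x) ∈ K := by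
    simp only [hKdef, mem_setOf_eq]
    refine ⟨hx, ?_, ?_⟩
    · rw [hqid x hx]; exact hlower x hx
    · rw [hqid x hx]; exact hupper x hx
  have hgeq : g (x, φl x) = f₀ (x, φl x) := by
    simp only [hgdef]
    rw [hPid x (φl x) hmem]
  refine ⟨hKS hmem, ?_⟩
  rw [← hgeq]
  exact hφd x hx

end MainProof
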